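/- Element-wise H-matrix approximation error: Let 1 < α < 2, c(α) = cos(απ/2)·Γ(2-α), and let τ = [a',b'], σ = [c',d'] with b' < c', x₀ = (a'+b')/2. Suppose for ν ≥ 2 the factors satisfy |C_ν| ≤ (ν(ν-1)/2)(h_i+h_{i+1})|x₀-a'|^{ν-2} and |R_ν| ≤ (1/(2ν!))(∏_{l=1}^ν(α+l-2))(h_j+h_{j+1})(|x₀-a'|+|c'-b'|)^{-(ν+α-1)}. Then for k ≥ 2, |∑_{ν=k}^∞ C_ν R_ν| / (2|c(α)|) ≤ (1/(8|c(α)|)) · k(k-1)(h_i+h_{i+1})(h_j+h_{j+1}) / ((|x₀-a'|+|c'-b'|)^{α-1} |x₀-a'|²) · r^k / (1-r)³, where r = |x₀-a'|/(|x₀-a'|+|c'-b'|). -/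

import Mathlib

set_option maxHeartbeats 1600000


open Real

/-- Element-wise H-matrix approximation error. With `c(α) = cos(απ/2) Γ(2-α)`,
`D = |x₀-a'| + |c'-b'|` and `r = |x₀-a'| / D`, if the factors satisfy
`|C_ν| ≤ (ν(ν-1)/2)(hᵢ+hᵢ₊₁)|x₀-a'|^{ν-2}` and
`|R_ν| ≤ (1/(2ν!)) (∏_{l=1}^ν (α+l-2)) (hⱼ+hⱼ₊₁) D^{-(ν+α-1)}` for all `ν ≥ 2`,
then for `k ≥ 2`,
`|∑_{ν=k}^∞ C_ν R_ν| / (2|c(α)|) ≤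
  (1/(8|c(α)|)) k(k-1)(hᵢ+hᵢ₊₁)(hⱼ+hⱼ₊₁) / (D^{α-1} |x₀-a'|²) · r^k / (1-r)³`. -/
theorem element_wise_error (α : ℝ) (hα₁ : 1 < α) (hα₂ : α < 2)
    (hi hi1 hj hj1 : ℝ) (hhi : 0 < hi) (hhi1 : 0 < hi1) (hhj : 0 < hj) (hhj1 : 0 < hj1)
    (a' b' c' : ℝ) (hab : a' < b') (hbc : b' < c')
    (x₀ : ℝ) (hx₀ : x₀ = (a' + b') / 2)
    (C R : ℕ → ℝ)
    (hC : ∀ ν : ℕ, 2 ≤ ν →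
      |C ν| ≤ ((ν : ℝ) * ((ν : ℝ) - 1) / 2) * (hi + hi1) * |x₀ - a'| ^ (ν - 2))
    (hR : ∀ ν : ℕ, 2 ≤ ν →
      |R ν| ≤ (1 / (2 * (Nat.factorial ν : ℝ))) * (∏ l ∈ Finset.Icc 1 ν, (α + (l : ℝ) - 2)) *
        (hj + hj1) * (|x₀ - a'| + |c' - b'|) ^ (-((ν : ℝ) + α - 1)))
    (k : ℕ) (hk : 2 ≤ k) :
    |∑' n : ℕ, C (k + n) * R (k + n)| / (2 * |Real.cos (α * π / 2) * Real.Gamma (2 - α)|) ≤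
      (1 / (8 * |Real.cos (α * π / 2) * Real.Gamma (2 - α)|)) *
        ((k : ℝ) * ((k : ℝ) - 1) * (hi + hi1) * (hj + hj1) /
          ((|x₀ - a'| + |c' - b'|) ^ (α - 1) * |x₀ - a'| ^ 2)) *
        ((|x₀ - a'| / (|x₀ - a'| + |c' - b'|)) ^ k /
          (1 - |x₀ - a'| / (|x₀ - a'| + |c' - b'|)) ^ 3) := by
  have hπ : 0 < π := Real.pi_pos
  -- positivity of |c(α)|
  have hcos : Real.cos (α * π / 2) < 0 := by
    apply Real.cos_neg_of_pi_div_two_lt_of_lt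
    · rw [div_lt_div_iff₀ (by norm_num) (by norm_num)]
      nlinarith
    · nlinarith
  have hGamma : 0 < Real.Gamma (2 - α) := Real.Gamma_pos_of_pos (by linarith)
  have hM : 0 < |Real.cos (α * π / 2) * Real.Gamma (2 - α)| := by
    rw [abs_mul]
    exact mul_pos (abs_pos.mpr hcos.ne) (abs_pos.mpr hGamma.ne')
  set M := |Real.cos (α * π / 2) * Real.Gamma (2 - α)| with hMdef
  -- basic quantities
  have hA : 0 < |x₀ - a'| := by
    rw [abs_pos, sub_ne_zero, hx₀]
    intro h; linarith
  have hB : 0 < |c' - b'| := by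
    rw [abs_pos, sub_ne_zero]
    intro h; linarith [h ▸ hbc]
  set A := |x₀ - a'| with hAdef
  set B := |c' - b'| with hBdef
  set D := A + B with hDdef
  have hD : 0 < D := by positivity
  set r := A / D with hrdef
  have hr0 : 0 < r := div_pos hA hD
  have hr1 : r < 1 := (div_lt_one hD).mpr (by simp only [hDdef]; linarith)
  have hDpow : 0 < D ^ (α - 1) := Real.rpow_pos_of_pos hD _
  set E := (hi + hi1) * (hj + hj1) / (D ^ (α - 1) * A ^ 2) with hEdef
  have hE : 0 < E := by positivity
  have hkR : (2 : ℝ) ≤ (k : ℝ) := by exact_mod_cast hk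
  set Q := (1 / 4 : ℝ) * E * ((k : ℝ) * ((k : ℝ) - 1)) * r ^ k with hQdef
  have hQ0 : 0 ≤ Q := by
    have : 0 ≤ (k : ℝ) * ((k : ℝ) - 1) := by nlinarith
    positivity
  -- the geometric-type series
  have hgs : HasSum (fun n : ℕ => (((n + 2).choose 2 : ℕ) : ℝ) * r ^ n) (1 / (1 - r) ^ 3) := by
    have hnorm : ‖r‖ < 1 := by rw [Real.norm_eq_abs, abs_of_pos hr0]; exact hr1
    simpa using hasSum_choose_mul_geometric_of_norm_lt_one 2 hnorm
  have hG : HasSum (fun n : ℕ => Q * ((((n + 2).choose 2 : ℕ) : ℝ) * r ^ n))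
      (Q * (1 / (1 - r) ^ 3)) := hgs.mul_left Q
  -- the termwise bound
  have key : ∀ n : ℕ, |C (k + n) * R (k + n)| ≤ Q * ((((n + 2).choose 2 : ℕ) : ℝ) * r ^ n) := by
    intro n
    set ν := k + n with hνdef
    have hν : 2 ≤ ν := le_trans hk (Nat.le_add_right k n)
    have hνR : (2 : ℝ) ≤ (ν : ℝ) := by exact_mod_cast hν
    have hNR : (0 : ℝ) ≤ (n : ℝ) := Nat.cast_nonneg n
    -- bound the product by the factorial
    have hPle : (∏ l ∈ Finset.Icc 1 ν, (α + (l : ℝ) - 2)) ≤ (Nat.factorial ν : ℝ) := by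
      have : (∏ l ∈ Finset.Icc 1 ν, (α + (l : ℝ) - 2)) ≤ ∏ l ∈ Finset.Icc 1 ν, (l : ℝ) := by
        apply Finset.prod_le_prod
        · intro l hl
          rw [Finset.mem_Icc] at hl
          have : (1 : ℝ) ≤ (l : ℝ) := by exact_mod_cast hl.1
          linarith
        · intro l hl; linarith
      refine this.trans_eq ?_
      rw [← Nat.cast_prod]
      norm_cast
      rw [← Finset.Ico_add_one_right_eq_Icc]
      exact Finset.prod_Ico_id_eq_factorial ν
    have hfac : (0 : ℝ) < (Nat.factorial ν : ℝ) := by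
      exact_mod_cast Nat.factorial_pos ν
    have hpowpos : (0 : ℝ) < D ^ (-((ν : ℝ) + α - 1)) := Real.rpow_pos_of_pos hD _
    -- refined bound on |R ν|
    have hRb : |R ν| ≤ 1 / 2 * (hj + hj1) * D ^ (-((ν : ℝ) + α - 1)) := by
      refine (hR ν hν).trans ?_
      have h12 : (1 / (2 * (Nat.factorial ν : ℝ))) * (∏ l ∈ Finset.Icc 1 ν, (α + (l : ℝ) - 2))
          ≤ 1 / 2 := by
        rw [show (1 : ℝ) / 2 = (1 / (2 * (Nat.factorial ν : ℝ))) * (Nat.factorial ν : ℝ) by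
          field_simp]
        exact mul_le_mul_of_nonneg_left hPle (by positivity)
      have hx : (0 : ℝ) ≤ (hj + hj1) * D ^ (-((ν : ℝ) + α - 1)) := by positivity
      calc (1 / (2 * (Nat.factorial ν : ℝ))) * (∏ l ∈ Finset.Icc 1 ν, (α + (l : ℝ) - 2)) *
            (hj + hj1) * D ^ (-((ν : ℝ) + α - 1))
          = ((1 / (2 * (Nat.factorial ν : ℝ))) * (∏ l ∈ Finset.Icc 1 ν, (α + (l : ℝ) - 2))) *
            ((hj + hj1) * D ^ (-((ν : ℝ) + α - 1))) := by ring
        _ ≤ (1 / 2) * ((hj + hj1) * D ^ (-((ν : ℝ) + α - 1))) :=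
            mul_le_mul_of_nonneg_right h12 hx
        _ = 1 / 2 * (hj + hj1) * D ^ (-((ν : ℝ) + α - 1)) := by ring
    -- product bound
    have hCb := hC ν hν
    have hCRb : |C ν * R ν| ≤ (((ν : ℝ) * ((ν : ℝ) - 1) / 2) * (hi + hi1) * A ^ (ν - 2)) *
        (1 / 2 * (hj + hj1) * D ^ (-((ν : ℝ) + α - 1))) := by
      rw [abs_mul]
      exact mul_le_mul hCb hRb (abs_nonneg _)
        (by have : (0:ℝ) ≤ (ν : ℝ) * ((ν : ℝ) - 1) / 2 := by nlinarith
            positivity)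
    -- rewrite the bound
    have hpow_split : D ^ (-((ν : ℝ) + α - 1)) = (D ^ ν)⁻¹ * (D ^ (α - 1))⁻¹ := by
      rw [show -((ν : ℝ) + α - 1) = (-(ν : ℝ)) + (-(α - 1)) by ring,
        Real.rpow_add hD, Real.rpow_neg hD.le, Real.rpow_neg hD.le, Real.rpow_natCast]
    have hApow : A ^ (ν - 2) * A ^ 2 = A ^ ν := by
      rw [← pow_add]; congr 1; omega
    have hrpow : r ^ ν = A ^ ν / D ^ ν := div_pow A D ν
    have hident : (((ν : ℝ) * ((ν : ℝ) - 1) / 2) * (hi + hi1) * A ^ (ν - 2)) *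
        (1 / 2 * (hj + hj1) * D ^ (-((ν : ℝ) + α - 1))) =
        (1 / 4) * E * ((ν : ℝ) * ((ν : ℝ) - 1)) * r ^ ν := by
      rw [hpow_split, hrpow, hEdef]
      have hADν : A ^ (ν - 2) = A ^ ν / A ^ 2 := by
        rw [eq_div_iff (by positivity)]; exact hApow
      rw [hADν]
      field_simp
      ring
    rw [hident] at hCRb
    refine hCRb.trans ?_
    -- combinatorial inequality
    have hch : (((n + 2).choose 2 : ℕ) : ℝ) = ((n : ℝ) + 2) * ((n : ℝ) + 1) / 2 := by
      have h2 : 2 * ((n + 2).choose 2) = (n + 2) * (n + 1) := by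
        rw [Nat.choose_two_right]
        show 2 * ((n + 2) * (n + 1) / 2) = (n + 2) * (n + 1)
        exact Nat.mul_div_cancel' (by simpa [Nat.mul_comm] using
          (Nat.even_mul_succ_self (n + 1)).two_dvd)
      have := congrArg (fun m : ℕ => (m : ℝ)) h2
      push_cast at this
      linarith
    have hcomb : 2 * ((ν : ℝ) * ((ν : ℝ) - 1)) ≤
        (k : ℝ) * ((k : ℝ) - 1) * (((n : ℝ) + 1) * ((n : ℝ) + 2)) := by
      have hνcast : (ν : ℝ) = (k : ℝ) + (n : ℝ) := by
        rw [hνdef]; push_cast; ring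
      rw [hνcast]
      have hnk : (0 : ℝ) ≤ (n : ℝ) * ((k : ℝ) - 2) := mul_nonneg hNR (by linarith)
      have h1 : 2 * ((k : ℝ) + (n : ℝ)) ≤ (k : ℝ) * ((n : ℝ) + 2) := by linarith
      have h2 : (k : ℝ) + (n : ℝ) - 1 ≤ ((k : ℝ) - 1) * ((n : ℝ) + 1) := by linarith
      have h3 : (0 : ℝ) ≤ (k : ℝ) + (n : ℝ) - 1 := by linarith
      have h4 : (0 : ℝ) ≤ (k : ℝ) * ((n : ℝ) + 2) :=
        mul_nonneg (by linarith) (by linarith)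
      have hm := mul_le_mul h1 h2 h3 h4
      linarith [hm]
    have hrν : r ^ ν = r ^ k * r ^ n := by rw [hνdef, pow_add]
    rw [hQdef, hch, hrν]
    have hpos8 : (0 : ℝ) ≤ (1 / 8) * E * (r ^ k * r ^ n) := by positivity
    have hfin := mul_le_mul_of_nonneg_left hcomb hpos8
    linarith [hfin]
  -- summability and the tsum bound
  have habs_summable : Summable (fun n : ℕ => |C (k + n) * R (k + n)|) :=
    Summable.of_nonneg_of_le (fun n => abs_nonneg _) key hG.summable
  have hsummable : Summable (fun n : ℕ => C (k + n) * R (k + n)) :=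
    habs_summable.of_abs
  have hmain : |∑' n : ℕ, C (k + n) * R (k + n)| ≤ Q * (1 / (1 - r) ^ 3) := by
    calc |∑' n : ℕ, C (k + n) * R (k + n)|
        ≤ ∑' n : ℕ, |C (k + n) * R (k + n)| := by
          have hns : Summable (fun n : ℕ => ‖C (k + n) * R (k + n)‖) := by
            simpa only [Real.norm_eq_abs] using habs_summable
          simpa only [Real.norm_eq_abs] using norm_tsum_le_tsum_norm hns
      _ ≤ ∑' n : ℕ, Q * ((((n + 2).choose 2 : ℕ) : ℝ) * r ^ n) :=
          Summable.tsum_le_tsum key habs_summable hG.summable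
      _ = Q * (1 / (1 - r) ^ 3) := hG.tsum_eq
  -- conclude
  have h2M : (0 : ℝ) < 2 * M := by linarith
  calc |∑' n : ℕ, C (k + n) * R (k + n)| / (2 * M)
      ≤ (Q * (1 / (1 - r) ^ 3)) / (2 * M) := by
        exact div_le_div_of_nonneg_right hmain h2M.le
    _ = (1 / (8 * M)) * ((k : ℝ) * ((k : ℝ) - 1) * (hi + hi1) * (hj + hj1) /
          (D ^ (α - 1) * A ^ 2)) * (r ^ k / (1 - r) ^ 3) := by
        rw [hQdef, hEdef]
        have h1r : (1 : ℝ) - r ≠ 0 := by linarith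
        field_simp
        ring
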